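/- Let R = ⊕_{i≥0} R_i be an ℕ-graded ring and r ∈ R_k (k ≥ 1) a central element that is not a zero-divisor. Then the two-sided ideal generated by r - 1 intersects each homogeneous component R_d trivially: (r-1) ∩ R_d = 0 for all d ∈ ℕ. -/

import Mathlib

/-- Let `R = ⊕_{i≥0} R_i` be an ℕ-graded ring and `r ∈ R_k` (`k ≥ 1`) a central element
that is not a zero-divisor.  Then the two-sided ideal generated by `r - 1` (which, as `r - 1`
is central, consists of the elements `y * (r - 1)`) intersects each homogeneous component
`R_d` trivially. -/
theorem graded_central_nzd_ideal_meets_components_trivially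
    {A : Type*} [Ring A] (𝒜 : ℕ → AddSubgroup A) [GradedRing 𝒜]
    (k : ℕ) (hk : 1 ≤ k) (r : A) (hr : r ∈ 𝒜 k)
    (hcentral : ∀ x : A, r * x = x * r)
    (hnzd : r ∈ nonZeroDivisors A)
    (d : ℕ) (x : A) (hx : x ∈ 𝒜 d) (hmem : ∃ y : A, x = y * (r - 1)) :
    x = 0 := by
  classical
  obtain ⟨y, hy⟩ := hmem
  set Y : ℕ → A := fun m => (DirectSum.decompose 𝒜 y m : A) with hYdef
  -- key relation: for m ≠ d, Y m = decompose (y*r) m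
  have hxsub : x = y * r - y := by rw [hy, mul_sub, mul_one]
  have hdec : ∀ m : ℕ, (DirectSum.decompose 𝒜 (y * r - y) m : A)
      = (DirectSum.decompose 𝒜 (y * r) m : A) - Y m := by
    intro m
    have h1 := (DirectSum.decomposeAddEquiv 𝒜).map_sub (y * r) y
    simp only [DirectSum.decomposeAddEquiv_apply] at h1
    rw [h1, DirectSum.sub_apply, AddSubgroup.coe_sub]
  have key : ∀ m : ℕ, m ≠ d →
      Y m = (DirectSum.decompose 𝒜 (y * r) m : A) := by
    intro m hm
    have h0 : (DirectSum.decompose 𝒜 x m : A) = 0 :=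
      DirectSum.decompose_of_mem_ne 𝒜 hx (Ne.symm hm)
    rw [hxsub, hdec, sub_eq_zero] at h0
    exact h0.symm
  -- value of decompose (y*r) m
  have hyr : ∀ m : ℕ, (DirectSum.decompose 𝒜 (y * r) m : A)
      = if k ≤ m then Y (m - k) * r else 0 := by
    intro m
    exact DirectSum.coe_decompose_mul_of_right_mem 𝒜 m hr
  -- Step 1: Y (d + j * k) = Y d * r ^ j
  have step1 : ∀ j : ℕ, Y (d + j * k) = Y d * r ^ j := by
    intro j
    induction j with
    | zero => simp
    | succ n ih =>
      have hm : d + (n + 1) * k ≠ d := by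
        have : 1 ≤ (n + 1) * k := Nat.one_le_iff_ne_zero.mpr (by positivity)
        omega
      have hk' : k ≤ d + (n + 1) * k := by nlinarith
      rw [key _ hm, hyr, if_pos hk']
      have : d + (n + 1) * k - k = d + n * k := by rw [add_mul, one_mul]; omega
      rw [this, ih, pow_succ, mul_assoc]
  -- Step 2: Y d = 0 using finite support and r nzd
  have hYd : Y d = 0 := by
    set N : ℕ := (DirectSum.decompose 𝒜 y).support.sup id + 1 with hN
    have hbig : Y (d + N * k) = 0 := by
      have hnot : d + N * k ∉ (DirectSum.decompose 𝒜 y).support := by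
        intro hmem
        have := Finset.le_sup (f := id) hmem
        simp only [id] at this
        nlinarith
      have := DFinsupp.notMem_support_iff.mp hnot
      simp [hYdef, this]
    rw [step1 N] at hbig
    have hpow : r ^ N ∈ nonZeroDivisors A := pow_mem hnzd N
    exact hpow.2 _ hbig
  -- Step 3: Y m = 0 for all m < d
  have step3 : ∀ m, m < d → Y m = 0 := by
    intro m
    induction m using Nat.strong_induction_on with
    | _ m ih =>
      intro hmd
      rw [key m (Nat.ne_of_lt hmd), hyr]
      by_cases hkm : k ≤ m
      · rw [if_pos hkm, ih (m - k) (by omega) (by omega), zero_mul]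
      · rw [if_neg hkm]
  -- conclude
  have hxd : x = (DirectSum.decompose 𝒜 (y * r) d : A) - Y d := by
    conv_lhs => rw [← DirectSum.decompose_of_mem_same 𝒜 hx, hxsub]
    exact hdec d
  rw [hxd, hYd, sub_zero, hyr]
  by_cases hkd : k ≤ d
  · rw [if_pos hkd, step3 (d - k) (by omega), zero_mul]
  · rw [if_neg hkd]
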